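/- Let n ∈ ℕ, let Φ : ℝ^n → ℝ be twice continuously differentiable and bounded below, and let α, β > 0. Let x : ℝ → ℝ^n be twice differentiable and satisfy, for all t ≥ 0, x''(t) + α·x'(t) + β·(D(∇Φ)(x(t)))(x'(t)) + ∇Φ(x(t)) = 0. Then t ↦ ‖x'(t)‖² and t ↦ ‖∇Φ(x(t))‖² are integrable on [0,∞); that is, ∫₀^∞ ‖x'(t)‖² dt < ∞ and ∫₀^∞ ‖∇Φ(x(t))‖² dt < ∞. -/

import Mathlib

open Filter MeasureTheory

theorem stmt_14 {n : ℕ} (Φ : EuclideanSpace ℝ (Fin n) → ℝ) (hΦ : ContDiff ℝ 2 Φ)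
    (hbdd : ∃ C : ℝ, ∀ y, C ≤ Φ y)
    (α β : ℝ) (hα : 0 < α) (hβ : 0 < β)
    (x x' x'' : ℝ → EuclideanSpace ℝ (Fin n))
    (hx : ∀ t : ℝ, HasDerivAt x (x' t) t)
    (hx' : ∀ t : ℝ, HasDerivAt x' (x'' t) t)
    (heq : ∀ t : ℝ, 0 ≤ t →
      x'' t + α • x' t + β • (fderiv ℝ (gradient Φ) (x t)) (x' t) + gradient Φ (x t) = 0) :
    IntegrableOn (fun t => ‖x' t‖ ^ 2) (Set.Ici (0 : ℝ)) ∧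
    IntegrableOn (fun t => ‖gradient Φ (x t)‖ ^ 2) (Set.Ici (0 : ℝ)) := by
  obtain ⟨C, hC⟩ := hbdd
  set g : ℝ → EuclideanSpace ℝ (Fin n) := fun t => gradient Φ (x t) with hg_def
  have hgrad : ContDiff ℝ 1 (gradient Φ) := by
    have h1 : ContDiff ℝ 1 (fderiv ℝ Φ) := hΦ.fderiv_right (by norm_num)
    exact ((InnerProductSpace.toDual ℝ (EuclideanSpace ℝ (Fin n))).symm.contDiff).comp h1
  have cont_x : Continuous x := continuous_iff_continuousAt.mpr fun t => (hx t).continuousAt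
  have cont_x' : Continuous x' := continuous_iff_continuousAt.mpr fun t => (hx' t).continuousAt
  have cont_g : Continuous g := hgrad.continuous.comp cont_x
  set F : ℝ → ℝ := fun t => α * ‖x' t‖ ^ 2 + β * ‖g t‖ ^ 2 with hF_def
  set W : ℝ → ℝ := fun t => (α * β + 1) * Φ (x t) + (1 / 2) * ‖x' t + β • g t‖ ^ 2 with hW_def
  have hFcont : Continuous F :=
    (continuous_const.mul (cont_x'.norm.pow 2)).add (continuous_const.mul (cont_g.norm.pow 2))
  have hF0 : ∀ t, 0 ≤ F t := fun t => by positivity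
  -- derivative of W
  have hW : ∀ t, 0 ≤ t → HasDerivAt W (-(F t)) t := by
    intro t ht
    have hxt := hx t
    have hgt : HasDerivAt g ((fderiv ℝ (gradient Φ) (x t)) (x' t)) t :=
      ((hgrad.differentiable (by norm_num) (x t)).hasFDerivAt).comp_hasDerivAt t hxt
    have hΦd : HasDerivAt (fun s => Φ (x s)) ((inner ℝ (g t) (x' t) : ℝ)) t := by
      have h1 : HasGradientAt Φ (g t) (x t) :=
        (hΦ.differentiable (by norm_num) (x t)).hasGradientAt
      have h2 := h1.hasFDerivAt.comp_hasDerivAt t hxt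
      simp [InnerProductSpace.toDual_apply_apply] at h2
      exact h2
    set H := (fderiv ℝ (gradient Φ) (x t)) (x' t) with hH
    have hv : HasDerivAt (fun s => x' s + β • g s) (x'' t + β • H) t :=
      (hx' t).add (hgt.const_smul β)
    have h0 : (x'' t + β • H) + (α • x' t + g t) = 0 := by
      have h := heq t ht; rw [← h]; abel
    have hveq : x'' t + β • H = -(α • x' t + g t) := add_eq_zero_iff_eq_neg.mp h0
    rw [hveq] at hv
    have hnv : HasDerivAt (fun s => ‖x' s + β • g s‖ ^ 2)
        ((inner ℝ (x' t + β • g t) (-(α • x' t + g t)) : ℝ)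
          + (inner ℝ (-(α • x' t + g t)) (x' t + β • g t) : ℝ)) t := by
      have h3 := hv.inner ℝ hv
      have : (fun s => (inner ℝ (x' s + β • g s) (x' s + β • g s) : ℝ))
          = fun s => ‖x' s + β • g s‖ ^ 2 := by
        funext s; rw [real_inner_self_eq_norm_sq]
      rwa [this] at h3
    have hWd := (hΦd.const_mul (α * β + 1)).add (hnv.const_mul (1 / 2))
    convert hWd using 1
    · rfl
    · rfl
    · rfl
    have e1 : (inner ℝ (g t) (x' t) : ℝ) = inner ℝ (x' t) (g t) := real_inner_comm _ _
    simp only [inner_neg_left, inner_neg_right, inner_add_left, inner_add_right,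
      real_inner_smul_left, real_inner_smul_right, real_inner_self_eq_norm_sq, e1]
    simp only [hF_def]
    ring
  -- bound on integrals
  have key : ∀ T : ℝ, 0 ≤ T → (∫ t in (0:ℝ)..T, F t) ≤ W 0 - (α * β + 1) * C := by
    intro T hT
    have hint : IntervalIntegrable (fun t => -(F t)) volume 0 T :=
      (hFcont.neg).intervalIntegrable _ _
    have hftc := intervalIntegral.integral_eq_sub_of_hasDerivAt (f := W)
      (f' := fun t => -(F t))
      (by
        intro t htmem
        rw [Set.uIcc_of_le hT] at htmem
        exact hW t htmem.1) hint
    have h2 : (∫ t in (0:ℝ)..T, F t) = W 0 - W T := by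
      rw [intervalIntegral.integral_neg] at hftc; linarith
    have hWT : (α * β + 1) * C ≤ W T := by
      have h1 : (α * β + 1) * C ≤ (α * β + 1) * Φ (x T) :=
        mul_le_mul_of_nonneg_left (hC _) (by positivity)
      have h2' : (0:ℝ) ≤ (1 / 2) * ‖x' T + β • g T‖ ^ 2 := by positivity
      simp only [hW_def]; linarith
    linarith
  have hFint : IntegrableOn F (Set.Ici (0 : ℝ)) := by
    rw [integrableOn_Ici_iff_integrableOn_Ioi]
    apply integrableOn_Ioi_of_intervalIntegral_norm_bounded (W 0 - (α * β + 1) * C) 0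
      (b := fun i : ℕ => (i : ℝ)) (fun i => (hFcont.intervalIntegrable 0 i).1)
      tendsto_natCast_atTop_atTop
    filter_upwards with i
    have : (∫ t in (0:ℝ)..(i:ℝ), ‖F t‖) = ∫ t in (0:ℝ)..(i:ℝ), F t :=
      intervalIntegral.integral_congr fun t _ => Real.norm_of_nonneg (hF0 t)
    rw [this]
    exact key i (Nat.cast_nonneg i)
  constructor
  · refine (hFint.const_mul α⁻¹).mono' ?_ ?_
    · exact (cont_x'.norm.pow 2).aestronglyMeasurable
    · filter_upwards with t
      rw [Real.norm_of_nonneg (by positivity)]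
      have e : α⁻¹ * F t = ‖x' t‖ ^ 2 + α⁻¹ * (β * ‖g t‖ ^ 2) := by
        simp only [hF_def]
        rw [mul_add, ← mul_assoc α⁻¹ α, inv_mul_cancel₀ hα.ne', one_mul]
      have h1 : 0 ≤ α⁻¹ * (β * ‖g t‖ ^ 2) := by positivity
      rw [e]; linarith
  · refine (hFint.const_mul β⁻¹).mono' ?_ ?_
    · exact (cont_g.norm.pow 2).aestronglyMeasurable
    · filter_upwards with t
      rw [Real.norm_of_nonneg (by positivity)]
      have e : β⁻¹ * F t = β⁻¹ * (α * ‖x' t‖ ^ 2) + ‖g t‖ ^ 2 := by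
        simp only [hF_def]
        rw [mul_add, ← mul_assoc β⁻¹ β, inv_mul_cancel₀ hβ.ne', one_mul]
      have h1 : 0 ≤ β⁻¹ * (α * ‖x' t‖ ^ 2) := by positivity
      rw [e]; linarith
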